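/- Let $A$ be a domain with quotient field $F$, $a \subset A$ a prime ideal. Then there exists a valuation ring $W$ of $F$ with $A \subseteq W$, $m_W \cap A = a$, and $W/m_W$ algebraic over the quotient field of $A/a$. -/

import Mathlib

open Polynomial

/-- A pair: a subring of `K` with a ring hom to `Ω`. -/
structure ChevPair (K Ω : Type*) [Field K] [Field Ω] where
  S : Subring K
  f : S →+* Ω

namespace ChevPair

variable {K Ω : Type*} [Field K] [Field Ω]

instance : PartialOrder (ChevPair K Ω) where
  le P Q := ∃ h : P.S ≤ Q.S, Q.f.comp (Subring.inclusion h) = P.f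
  le_refl P := ⟨le_rfl, RingHom.ext fun x => congrArg P.f (Subtype.ext rfl)⟩
  le_trans P Q R h₁ h₂ := by
    refine ⟨h₁.1.trans h₂.1, RingHom.ext fun x => ?_⟩
    calc R.f (Subring.inclusion (h₁.1.trans h₂.1) x)
        = R.f (Subring.inclusion h₂.1 (Subring.inclusion h₁.1 x)) := by
          exact congrArg R.f (Subtype.ext rfl)
      _ = Q.f (Subring.inclusion h₁.1 x) := RingHom.congr_fun h₂.2 _
      _ = P.f x := RingHom.congr_fun h₁.2 _
  le_antisymm P Q h₁ h₂ := by
    obtain ⟨SP, fP⟩ := P; obtain ⟨SQ, fQ⟩ := Q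
    obtain rfl : SP = SQ := le_antisymm h₁.1 h₂.1
    obtain ⟨h, hf⟩ := h₁
    congr 1
    exact hf.symm.trans (RingHom.ext fun x => congrArg fQ (Subtype.ext rfl))

theorem le_def {P Q : ChevPair K Ω} :
    P ≤ Q ↔ ∃ h : P.S ≤ Q.S, Q.f.comp (Subring.inclusion h) = P.f := Iff.rfl

theorem exists_isMax (P₀ : ChevPair K Ω) : ∃ M : ChevPair K Ω, P₀ ≤ M ∧ IsMax M := by
  refine zorn_le_nonempty_Ici₀ _ ?_ _ le_rfl
  intro c _hc hchain y hy
  haveI : Nonempty c := ⟨⟨y, hy⟩⟩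
  have hdir : Directed (· ≤ ·) (fun P : c => P.1.S) :=
    hchain.directed.mono_comp _ (fun _ _ h => h.1)
  set T : Subring K := ⨆ P : c, P.1.S with hT
  have hmem : ∀ z : T, ∃ P : c, (z : K) ∈ P.1.S := fun z =>
    (Subring.mem_iSup_of_directed hdir).mp z.2
  have compat : ∀ (P Q : c) (x : K) (hP : x ∈ P.1.S) (hQ : x ∈ Q.1.S),
      P.1.f ⟨x, hP⟩ = Q.1.f ⟨x, hQ⟩ := by
    intro P Q x hP hQ
    rcases hchain.total P.2 Q.2 with h | h
    · rw [← h.2]; exact congrArg Q.1.f (Subtype.ext rfl)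
    · rw [← h.2]; exact (congrArg P.1.f (Subtype.ext rfl)).symm
  classical
  let φ : T → Ω := fun z => (hmem z).choose.1.f ⟨z, (hmem z).choose_spec⟩
  have hφ : ∀ (z : T) (P : c) (h : (z : K) ∈ P.1.S), φ z = P.1.f ⟨z, h⟩ :=
    fun z P h => compat _ _ _ _ _
  have key2 : ∀ z w : T, ∃ P : c, (z : K) ∈ P.1.S ∧ (w : K) ∈ P.1.S := by
    intro z w
    obtain ⟨P, hz⟩ := hmem z
    obtain ⟨Q, hw⟩ := hmem w
    obtain ⟨R, hPR, hQR⟩ := hdir P Q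
    exact ⟨R, hPR hz, hQR hw⟩
  let F : T →+* Ω :=
  { toFun := φ
    map_one' := by
      obtain ⟨P, h⟩ := hmem 1
      rw [hφ 1 P h]
      exact (congrArg P.1.f (Subtype.ext rfl : (⟨((1 : T) : K), h⟩ : P.1.S) = 1)).trans
        (map_one _)
    map_mul' := by
      intro z w
      show φ (z * w) = φ z * φ w
      obtain ⟨P, hz, hw⟩ := key2 z w
      rw [hφ z P hz, hφ w P hw, hφ (z * w) P (mul_mem hz hw), ← map_mul]
      exact congrArg P.1.f (Subtype.ext rfl)
    map_zero' := by
      obtain ⟨P, h⟩ := hmem 0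
      show φ 0 = 0
      rw [hφ 0 P h]
      exact (congrArg P.1.f (Subtype.ext rfl : (⟨((0 : T) : K), h⟩ : P.1.S) = 0)).trans
        (map_zero _)
    map_add' := by
      intro z w
      show φ (z + w) = φ z + φ w
      obtain ⟨P, hz, hw⟩ := key2 z w
      rw [hφ z P hz, hφ w P hw, hφ (z + w) P (add_mem hz hw), ← map_add]
      exact congrArg P.1.f (Subtype.ext rfl) }
  refine ⟨⟨T, F⟩, fun z hz => ?_⟩
  refine ⟨le_iSup (fun P : c => P.1.S) ⟨z, hz⟩, RingHom.ext fun x => ?_⟩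
  exact (hφ _ ⟨z, hz⟩ x.2).trans (congrArg z.f (Subtype.ext rfl))


section Max


variable (M : ChevPair K Ω)

theorem isUnit_of_ne_zero (hM : IsMax M) {r : M.S} (hr : M.f r ≠ 0) : IsUnit r := by
  haveI : (RingHom.ker M.f).IsPrime := RingHom.ker_isPrime _
  set p := RingHom.ker M.f with hp
  let L := LocalSubring.ofPrime M.S p
  have hunits : ∀ s : p.primeCompl, IsUnit (M.f s) := by
    intro s
    have h2 := s.2
    simp only [Ideal.primeCompl, Submonoid.mem_mk, Subsemigroup.mem_mk,
      Set.mem_compl_iff, SetLike.mem_coe, hp, RingHom.mem_ker] at h2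
    exact isUnit_iff_ne_zero.mpr h2
  let g' : L.toSubring →+* Ω := IsLocalization.lift (M := p.primeCompl) hunits
  have hcomp : g'.comp (algebraMap M.S L.toSubring) = M.f := IsLocalization.lift_comp hunits
  have hle : M ≤ ⟨L.toSubring, g'⟩ := ⟨LocalSubring.le_ofPrime _ _, hcomp⟩
  have hSeq : L.toSubring = M.S := le_antisymm ((hM hle).1) hle.1
  have hrp : r ∈ p.primeCompl := by
    simp only [Ideal.primeCompl, Submonoid.mem_mk, Subsemigroup.mem_mk,
      Set.mem_compl_iff, SetLike.mem_coe, hp, RingHom.mem_ker]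
    exact hr
  have hu : IsUnit (algebraMap M.S L.toSubring r) :=
    IsLocalization.map_units (M := p.primeCompl) L.toSubring ⟨r, hrp⟩
  obtain ⟨w, hw⟩ := isUnit_iff_exists_inv.mp hu
  have hw1 : (r : K) * (w : K) = 1 := congrArg Subtype.val hw
  have hwM : (w : K) ∈ M.S := hSeq ▸ w.2
  exact isUnit_iff_exists_inv.mpr ⟨⟨w, hwM⟩, Subtype.ext hw1⟩

theorem not_isUnit_iff (hM : IsMax M) (r : M.S) : ¬ IsUnit r ↔ M.f r = 0 := by
  constructor
  · intro h
    by_contra h0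
    exact h (isUnit_of_ne_zero M hM h0)
  · intro h0 hu
    obtain ⟨u, rfl⟩ := hu
    have h1 : M.f ↑u * M.f ↑u⁻¹ = 1 := by
      rw [← map_mul, ← Units.val_mul, mul_inv_cancel, Units.val_one, map_one]
    rw [h0, zero_mul] at h1
    exact zero_ne_one h1

theorem isLocalRing (hM : IsMax M) : IsLocalRing M.S := by
  refine IsLocalRing.of_nonunits_add ?_
  intro x y hx hy
  rw [mem_nonunits_iff] at hx hy ⊢
  rw [not_isUnit_iff M hM] at hx hy ⊢
  rw [map_add, hx, hy, add_zero]

theorem ker_eq_maximalIdeal (hM : IsMax M) :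
    RingHom.ker M.f = @IsLocalRing.maximalIdeal M.S _ (isLocalRing M hM) := by
  haveI := isLocalRing M hM
  ext r
  rw [IsLocalRing.mem_maximalIdeal, mem_nonunits_iff, not_isUnit_iff M hM, RingHom.mem_ker]

theorem ker_isMaximal (hM : IsMax M) : (RingHom.ker M.f).IsMaximal := by
  haveI := isLocalRing M hM
  rw [ker_eq_maximalIdeal M hM]
  exact IsLocalRing.maximalIdeal.isMaximal _


end Max
section Core
variable [IsAlgClosed Ω]
set_option linter.unusedSectionVars false

variable (M : ChevPair K Ω)

set_option maxHeartbeats 1000000 in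
set_option synthInstance.maxHeartbeats 400000 in
theorem exists_eval₂ (x : K)
    (Q : Ideal (Algebra.adjoin M.S ({x} : Set K)))
    (hle : RingHom.ker M.f ≤ Q.comap (algebraMap M.S (Algebra.adjoin M.S ({x} : Set K))))
    (e : Algebra.adjoin M.S ({x} : Set K) ⧸ Q) :
    ∃ p : (M.S ⧸ RingHom.ker M.f)[X],
      Polynomial.eval₂ (Ideal.quotientMap Q (algebraMap _ _) hle)
        (Ideal.Quotient.mk Q ⟨x, Algebra.self_mem_adjoin_singleton _ _⟩) p = e := by
  obtain ⟨s, rfl⟩ := Ideal.Quotient.mk_surjective e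
  obtain ⟨y, hy⟩ := s
  have hy' := hy
  rw [Algebra.adjoin_singleton_eq_range_aeval] at hy'
  obtain ⟨p₀, hp₀⟩ := hy'
  refine ⟨p₀.map (Ideal.Quotient.mk (RingHom.ker M.f)), ?_⟩
  rw [Polynomial.eval₂_map, Ideal.quotientMap_comp_mk hle, ← Polynomial.hom_eval₂]
  congr 1
  refine Subtype.ext ?_
  have h1 : Polynomial.eval₂ (algebraMap M.S (Algebra.adjoin M.S ({x} : Set K)))
      (⟨x, Algebra.self_mem_adjoin_singleton _ _⟩ : Algebra.adjoin M.S ({x} : Set K)) p₀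
      = Polynomial.aeval
        (⟨x, Algebra.self_mem_adjoin_singleton _ _⟩ : Algebra.adjoin M.S ({x} : Set K)) p₀ :=
    (Polynomial.aeval_def _ _).symm
  rw [h1]
  rw [show ((Polynomial.aeval
      (⟨x, Algebra.self_mem_adjoin_singleton _ _⟩ : Algebra.adjoin M.S ({x} : Set K)) p₀ : _) : K)
      = Polynomial.aeval x p₀ from Polynomial.aeval_subalgebra_coe _ _ _]
  exact hp₀

set_option maxHeartbeats 1000000 in
set_option synthInstance.maxHeartbeats 400000 in
theorem mem_of_quot (hM : IsMax M) (x : K)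
    (Q : Ideal (Algebra.adjoin M.S ({x} : Set K))) (hQmax : Q.IsMaximal)
    (hle : RingHom.ker M.f ≤ Q.comap (algebraMap M.S (Algebra.adjoin M.S ({x} : Set K))))
    (hint : (Ideal.quotientMap (I := RingHom.ker M.f) Q
        (algebraMap M.S (Algebra.adjoin M.S ({x} : Set K))) hle).IsIntegralElem
        (Ideal.Quotient.mk Q ⟨x, Algebra.self_mem_adjoin_singleton _ _⟩)) :
    x ∈ M.S := by
  classical
  haveI := hQmax
  haveI hkermax := ker_isMaximal M hM
  letI : Field (M.S ⧸ RingHom.ker M.f) := Ideal.Quotient.field _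
  letI : Field (Algebra.adjoin M.S ({x} : Set K) ⧸ Q) := Ideal.Quotient.field Q
  letI : Algebra (M.S ⧸ RingHom.ker M.f) (Algebra.adjoin M.S ({x} : Set K) ⧸ Q) :=
    (Ideal.quotientMap Q (algebraMap _ _) hle).toAlgebra
  letI : Algebra (M.S ⧸ RingHom.ker M.f) Ω :=
    (Ideal.Quotient.lift (RingHom.ker M.f) M.f (fun a ha => ha)).toAlgebra
  have hxbi : IsIntegral (M.S ⧸ RingHom.ker M.f)
      (Ideal.Quotient.mk Q (⟨x, Algebra.self_mem_adjoin_singleton _ _⟩ :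
        Algebra.adjoin M.S ({x} : Set K))) := hint
  have hgen : ∀ e : Algebra.adjoin M.S ({x} : Set K) ⧸ Q,
      e ∈ Algebra.adjoin (M.S ⧸ RingHom.ker M.f)
        ({Ideal.Quotient.mk Q ⟨x, Algebra.self_mem_adjoin_singleton _ _⟩} :
          Set (Algebra.adjoin M.S ({x} : Set K) ⧸ Q)) := by
    intro e
    obtain ⟨p, hp⟩ := exists_eval₂ M x Q hle e
    rw [← hp]
    exact Polynomial.aeval_mem_adjoin_singleton _ _
  have halg : ∀ e : Algebra.adjoin M.S ({x} : Set K) ⧸ Q,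
      IsIntegral (M.S ⧸ RingHom.ker M.f) e := fun e =>
    IsIntegral.of_mem_of_fg _ hxbi.fg_adjoin_singleton _ (hgen e)
  haveI : Algebra.IsAlgebraic (M.S ⧸ RingHom.ker M.f) (Algebra.adjoin M.S ({x} : Set K) ⧸ Q) :=
    ⟨fun e => (halg e).isAlgebraic⟩
  haveI : FaithfulSMul (M.S ⧸ RingHom.ker M.f) (Algebra.adjoin M.S ({x} : Set K) ⧸ Q) :=
    (faithfulSMul_iff_algebraMap_injective _ _).mpr (Ideal.quotientMap (I := RingHom.ker M.f) Q
      (algebraMap M.S (Algebra.adjoin M.S ({x} : Set K))) hle).injective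
  haveI : FaithfulSMul (M.S ⧸ RingHom.ker M.f) Ω :=
    (faithfulSMul_iff_algebraMap_injective _ _).mpr
      (Ideal.Quotient.lift (RingHom.ker M.f) M.f (fun a ha => ha)).injective
  let ψ : (Algebra.adjoin M.S ({x} : Set K) ⧸ Q) →ₐ[M.S ⧸ RingHom.ker M.f] Ω := IsAlgClosed.lift
  have hRS : M.S ≤ (Algebra.adjoin M.S ({x} : Set K)).toSubring :=
    fun r hr => (Algebra.adjoin M.S ({x} : Set K)).algebraMap_mem ⟨r, hr⟩
  have hcompat : (ψ.toRingHom.comp (Ideal.Quotient.mk Q)).comp (Subring.inclusion hRS) = M.f := by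
    ext r
    have e1 : Subring.inclusion hRS r = algebraMap M.S (Algebra.adjoin M.S ({x} : Set K)) r :=
      Subtype.ext rfl
    show ψ (Ideal.Quotient.mk Q (Subring.inclusion hRS r)) = M.f r
    rw [e1, ← RingHom.comp_apply, ← Ideal.quotientMap_comp_mk hle, RingHom.comp_apply]
    have e3 : ψ (Ideal.quotientMap Q (algebraMap _ _) hle (Ideal.Quotient.mk (RingHom.ker M.f) r))
        = algebraMap (M.S ⧸ RingHom.ker M.f) Ω (Ideal.Quotient.mk (RingHom.ker M.f) r) :=
      ψ.commutes _
    rw [e3]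
    exact Ideal.Quotient.lift_mk (RingHom.ker M.f) M.f _
  have hle2 : M ≤ ⟨(Algebra.adjoin M.S ({x} : Set K)).toSubring,
      ψ.toRingHom.comp (Ideal.Quotient.mk Q)⟩ := ⟨hRS, hcompat⟩
  exact (hM hle2).1 (Algebra.self_mem_adjoin_singleton M.S x)

set_option maxHeartbeats 1000000 in
set_option synthInstance.maxHeartbeats 400000 in
theorem mem_of_isIntegral (hM : IsMax M) {x : K} (hx : IsIntegral M.S x) : x ∈ M.S := by
  classical
  haveI hkermax := ker_isMaximal M hM
  haveI : Algebra.IsIntegral M.S (Algebra.adjoin M.S ({x} : Set K)) :=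
    Algebra.IsIntegral.adjoin (by simpa)
  have hker0 : RingHom.ker (algebraMap M.S (Algebra.adjoin M.S ({x} : Set K)))
      ≤ RingHom.ker M.f := by
    intro r hr
    rw [RingHom.mem_ker] at hr
    have hval : ((algebraMap M.S (Algebra.adjoin M.S ({x} : Set K)) r : _) : K) = 0 := by
      rw [hr]; rfl
    have hr0 : r = 0 := Subtype.ext hval
    rw [hr0]; exact zero_mem _
  obtain ⟨Q, hQmax, hQcomap⟩ :=
    Ideal.exists_ideal_over_maximal_of_isIntegral (RingHom.ker M.f) hker0
  have hle : RingHom.ker M.f ≤ Q.comap (algebraMap _ _) := hQcomap.ge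
  refine mem_of_quot M hM x Q hQmax hle ?_
  obtain ⟨p, pmonic, hp0⟩ := hx
  refine ⟨p.map (Ideal.Quotient.mk (RingHom.ker M.f)), pmonic.map _, ?_⟩
  rw [Polynomial.eval₂_map, Ideal.quotientMap_comp_mk hle, ← Polynomial.hom_eval₂]
  have hz : Polynomial.eval₂ (algebraMap M.S (Algebra.adjoin M.S ({x} : Set K)))
      (⟨x, Algebra.self_mem_adjoin_singleton _ _⟩ : Algebra.adjoin M.S ({x} : Set K)) p = 0 := by
    refine Subtype.ext ?_
    rw [show Polynomial.eval₂ (algebraMap M.S (Algebra.adjoin M.S ({x} : Set K)))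
        (⟨x, Algebra.self_mem_adjoin_singleton _ _⟩ : Algebra.adjoin M.S ({x} : Set K)) p
        = Polynomial.aeval
          (⟨x, Algebra.self_mem_adjoin_singleton _ _⟩ : Algebra.adjoin M.S ({x} : Set K)) p
      from (Polynomial.aeval_def _ _).symm]
    rw [show ((Polynomial.aeval
        (⟨x, Algebra.self_mem_adjoin_singleton _ _⟩ : Algebra.adjoin M.S ({x} : Set K)) p : _) : K)
        = Polynomial.aeval x p from Polynomial.aeval_subalgebra_coe _ _ _]
    rw [Polynomial.aeval_def]
    exact hp0
  rw [hz, map_zero]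

set_option maxHeartbeats 1000000 in
set_option synthInstance.maxHeartbeats 400000 in
theorem mem_or_inv_mem (hM : IsMax M) (x : K) : x ∈ M.S ∨ x⁻¹ ∈ M.S := by
  classical
  by_cases hx : x ∈ M.S
  · exact Or.inl hx
  right
  haveI hkermax := ker_isMaximal M hM
  letI : Field (M.S ⧸ RingHom.ker M.f) := Ideal.Quotient.field _
  have htop : (RingHom.ker M.f).map
      (algebraMap M.S (Algebra.adjoin M.S ({x} : Set K))) = ⊤ := by
    by_contra hne
    obtain ⟨Q, hQmax, hQle⟩ := Ideal.exists_le_maximal _ hne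
    have hle : RingHom.ker M.f ≤ Q.comap (algebraMap M.S (Algebra.adjoin M.S ({x} : Set K))) :=
      fun r hr => hQle (Ideal.mem_map_of_mem _ hr)
    haveI := hQmax
    letI : Field (Algebra.adjoin M.S ({x} : Set K) ⧸ Q) := Ideal.Quotient.field Q
    refine hx (mem_of_quot M hM x Q hQmax hle ?_)
    by_cases hxb0 : (Ideal.Quotient.mk Q
        (⟨x, Algebra.self_mem_adjoin_singleton _ _⟩ : Algebra.adjoin M.S ({x} : Set K))) = 0
    · exact ⟨Polynomial.X, Polynomial.monic_X, by rw [Polynomial.eval₂_X]; exact hxb0⟩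
    · obtain ⟨p, hp⟩ := exists_eval₂ M x Q hle (Ideal.Quotient.mk Q
        (⟨x, Algebra.self_mem_adjoin_singleton _ _⟩ : Algebra.adjoin M.S ({x} : Set K)))⁻¹
      have hq0 : (Polynomial.X * p - 1 : (M.S ⧸ RingHom.ker M.f)[X]) ≠ 0 := by
        intro h
        have hc : ((Polynomial.X * p - 1 : (M.S ⧸ RingHom.ker M.f)[X])).coeff 0 = -1 := by
          rw [Polynomial.coeff_sub, Polynomial.mul_coeff_zero, Polynomial.coeff_X_zero,
            zero_mul, Polynomial.coeff_one_zero]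
          ring
        rw [h, Polynomial.coeff_zero] at hc
        exact one_ne_zero (neg_eq_zero.mp hc.symm)
      have hqeval : Polynomial.eval₂ (Ideal.quotientMap Q (algebraMap _ _) hle)
          (Ideal.Quotient.mk Q
            (⟨x, Algebra.self_mem_adjoin_singleton _ _⟩ : Algebra.adjoin M.S ({x} : Set K)))
          (Polynomial.X * p - 1) = 0 := by
        rw [Polynomial.eval₂_sub, Polynomial.eval₂_mul, Polynomial.eval₂_X,
          Polynomial.eval₂_one, hp, mul_inv_cancel₀ hxb0, sub_self]
      refine ⟨(Polynomial.X * p - 1) * Polynomial.C ((Polynomial.X * p - 1 :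
          (M.S ⧸ RingHom.ker M.f)[X]).leadingCoeff)⁻¹,
        Polynomial.monic_mul_leadingCoeff_inv hq0, ?_⟩
      rw [Polynomial.eval₂_mul, hqeval, zero_mul]
  rw [Ideal.eq_top_iff_one] at htop
  obtain ⟨p, hp, hp'⟩ := (Algebra.mem_ideal_map_adjoin _ _).mp htop
  have hx0 : x ≠ 0 := fun e => hx (e ▸ zero_mem _)
  have hinv := IsUnit.invertible (isUnit_iff_ne_zero.mpr hx0)
  have hrev : Polynomial.aeval (⅟x) (p - 1).reverse = 0 := by
    simpa [← Polynomial.aeval_def, hp'] using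
      Polynomial.eval₂_reverse_eq_zero_iff (algebraMap M.S K) x (p - 1)
  rw [invOf_eq_right_inv (mul_inv_cancel₀ hx0)] at hrev
  have H : IsUnit ((p - 1).coeff 0) := by
    by_contra h
    rw [not_isUnit_iff M hM] at h
    have h2 : M.f (p.coeff 0) = 0 := (RingHom.mem_ker).mp (hp 0)
    have h3 : (1 : M.S) = p.coeff 0 - (p - 1).coeff 0 := by
      rw [Polynomial.coeff_sub, Polynomial.coeff_one_zero]; ring
    have h4 := congrArg M.f h3
    rw [map_one, map_sub, h2, h, sub_zero] at h4
    exact one_ne_zero h4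
  refine mem_of_isIntegral M hM ⟨Polynomial.C (H.unit⁻¹).1 * (p - 1).reverse, ?_, ?_⟩
  · have h0 : (p - 1).natTrailingDegree = 0 := by
      simp only [Polynomial.natTrailingDegree_eq_zero, Polynomial.coeff_sub,
        Polynomial.coeff_one_zero, ne_eq, sub_eq_zero]
      refine Or.inr fun h => ?_
      have h1 := hp 0
      rw [h, RingHom.mem_ker, map_one] at h1
      exact one_ne_zero h1
    rw [Polynomial.Monic.def, Polynomial.leadingCoeff_mul', Polynomial.reverse_leadingCoeff,
      Polynomial.trailingCoeff, h0]
    · simp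
    · have hne : p - 1 ≠ 0 := fun e => by simp [e] at H
      simpa
  · simp [← Polynomial.aeval_def, hrev]


end Core
end ChevPair
/-- Let `A` be a domain with quotient field `F` and `a ⊂ A` a
prime ideal.  Then there is a valuation ring `W` of `F` containing `A`, with center
`a` on `A` (i.e. `m_W ∩ A = a`) and with residue field `W/m_W` algebraic over the
quotient field of `A/a`.  The last condition is expressed as: every `y ∈ W`
satisfies, modulo `m_W`, a polynomial with coefficients in `A` not all of which lie
in `a`. -/
theorem exists_valuation_ring_with_center_and_algebraic_residue
    {A : Type*} [CommRing A] [IsDomain A] (a : Ideal A) (ha : a.IsPrime) :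
    ∃ W : ValuationSubring (FractionRing A), ∃ ι : A →+* W,
      (∀ x : A, (ι x : FractionRing A) = algebraMap A (FractionRing A) x) ∧
      -- the center of `W` on `A` is `a` : `m_W ∩ A = a`
      (∀ x : A, ¬ IsUnit (ι x) ↔ x ∈ a) ∧
      -- `W/m_W` is algebraic over `Q(A/a)`
      (∀ y : W, ∃ q : Polynomial A,
        (∃ i, q.coeff i ∉ a) ∧ ¬ IsUnit (Polynomial.eval y (q.map ι))) := by
  classical
  haveI := ha
  set Ω := AlgebraicClosure (FractionRing (A ⧸ a)) with hΩ
  set K := FractionRing A with hK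
  let f : A →+* Ω := (algebraMap (A ⧸ a) Ω).comp (Ideal.Quotient.mk a)
  have hfker : ∀ x : A, f x = 0 ↔ x ∈ a := by
    intro x
    constructor
    · intro h
      have h2 : (algebraMap (FractionRing (A ⧸ a)) Ω)
          ((algebraMap (A ⧸ a) (FractionRing (A ⧸ a))) (Ideal.Quotient.mk a x)) = 0 := by
        have h' : algebraMap (A ⧸ a) Ω (Ideal.Quotient.mk a x) = 0 := h
        rwa [IsScalarTower.algebraMap_apply (A ⧸ a) (FractionRing (A ⧸ a)) Ω] at h'
      have h3 := (map_eq_zero_iff _ (RingHom.injective _)).mp h2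
      have h4 := (map_eq_zero_iff _ (IsFractionRing.injective (A ⧸ a)
        (FractionRing (A ⧸ a)))).mp h3
      exact (Ideal.Quotient.eq_zero_iff_mem).mp h4
    · intro h
      have hz : Ideal.Quotient.mk a x = 0 := (Ideal.Quotient.eq_zero_iff_mem).mpr h
      show algebraMap (A ⧸ a) Ω (Ideal.Quotient.mk a x) = 0
      rw [hz, map_zero]
  let j : A →+* K := algebraMap A K
  have hjinj : Function.Injective j := IsFractionRing.injective A K
  let eA : A ≃+* j.range := RingEquiv.ofBijective j.rangeRestrict
    ⟨fun x y h => hjinj (congrArg Subtype.val h), j.rangeRestrict_surjective⟩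
  let P₀ : ChevPair K Ω := ⟨j.range, f.comp eA.symm.toRingHom⟩
  obtain ⟨M, hP₀M, hM⟩ := ChevPair.exists_isMax P₀
  let W : ValuationSubring K := ⟨M.S, fun x => ChevPair.mem_or_inv_mem M hM x⟩
  have hWle : ∀ z : A, j z ∈ M.S := fun z => hP₀M.1 ⟨z, rfl⟩
  let ι : A →+* W := j.codRestrict W.toSubring hWle
  have hfM : ∀ z : A, M.f (ι z) = f z := by
    intro z
    have e1 : ι z = Subring.inclusion hP₀M.1 (j.rangeRestrict z) := Subtype.ext rfl
    rw [e1, ← RingHom.comp_apply, hP₀M.2]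
    show f (eA.symm (eA z)) = f z
    rw [eA.symm_apply_apply]
  refine ⟨W, ι, fun x => rfl, ?_, ?_⟩
  · intro x
    rw [ChevPair.not_isUnit_iff M hM (ι x), hfM x, hfker x]
  · intro y
    haveI : Algebra.IsAlgebraic (FractionRing (A ⧸ a)) Ω := inferInstance
    obtain ⟨P, hP0, hPev⟩ :=
      (Algebra.IsAlgebraic.isAlgebraic (R := FractionRing (A ⧸ a)) (M.f y))
    set P' := IsLocalization.integerNormalization (nonZeroDivisors (A ⧸ a)) P with hP'
    have hP'0 : P' ≠ 0 := fun h =>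
      hP0 (by rwa [IsFractionRing.integerNormalization_eq_zero_iff] at h)
    have hP'ev : Polynomial.aeval (M.f y) P' = 0 :=
      IsLocalization.integerNormalization_aeval_eq_zero _ P hPev
    obtain ⟨q, hq⟩ := Polynomial.map_surjective (Ideal.Quotient.mk a)
      Ideal.Quotient.mk_surjective P'
    refine ⟨q, ⟨P'.natDegree, ?_⟩, ?_⟩
    · intro hmem
      refine (Polynomial.leadingCoeff_ne_zero.mpr hP'0) ?_
      have hc : P'.coeff P'.natDegree = Ideal.Quotient.mk a (q.coeff P'.natDegree) := by
        rw [← Polynomial.coeff_map, hq]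
      rw [Polynomial.leadingCoeff, hc, Ideal.Quotient.eq_zero_iff_mem]
      exact hmem
    · rw [ChevPair.not_isUnit_iff M hM]
      rw [Polynomial.eval_map, Polynomial.hom_eval₂]
      have hcomp : M.f.comp ι = f := RingHom.ext hfM
      rw [hcomp]
      show Polynomial.eval₂ ((algebraMap (A ⧸ a) Ω).comp (Ideal.Quotient.mk a)) (M.f y) q = 0
      rw [← Polynomial.eval₂_map, hq, ← Polynomial.aeval_def]
      exact hP'ev
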